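/- Let Σ = (X, 𝒟, φ) be a system and A ⊆ X any nonempty set. Then A is uniformly globally stable if and only if A is both uniformly (locally) stable and Lagrange stable. -/

import Mathlib

open scoped NNReal ENNReal
open Filter Topology Bornology

noncomputable section

/-- Functions of class 𝒦: continuous, strictly increasing, vanishing at zero. -/
def ClassK (γ : ℝ≥0 → ℝ≥0) : Prop :=
  Continuous γ ∧ StrictMono γ ∧ γ 0 = 0

/-- Functions of class 𝒦∞: class 𝒦 and unbounded. -/
def ClassKinf (γ : ℝ≥0 → ℝ≥0) : Prop :=
  ClassK γ ∧ ∀ M : ℝ≥0, ∃ r : ℝ≥0, M < γ r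

/-- Functions of class 𝒦ℒ. -/
def ClassKL (β : ℝ≥0 → ℝ≥0 → ℝ≥0) : Prop :=
  Continuous (fun p : ℝ≥0 × ℝ≥0 => β p.1 p.2) ∧
  (∀ t : ℝ≥0, ClassK fun r => β r t) ∧
  ∀ r : ℝ≥0, 0 < r →
    StrictAnti (fun t => β r t) ∧ Tendsto (fun t => β r t) atTop (𝓝 0)

/-- Distance of a point to a set, `‖x‖_A`. -/
def dA {X : Type*} [NormedAddCommGroup X] (A : Set X) (x : X) : ℝ≥0 :=
  (Metric.infDist x A).toNNReal

/-- The open ε-neighborhood `B_ε(A)` of a set. -/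
def ballSet {X : Type*} [NormedAddCommGroup X] (ε : ℝ≥0) (A : Set X) : Set X :=
  {x | dA A x < ε}

/-- A (time-invariant) control system with disturbances. -/
structure System (X : Type*) [NormedAddCommGroup X] [NormedSpace ℝ X]
    (W : Type*) [NormedAddCommGroup W] [NormedSpace ℝ W] where
  /-- the set of disturbance values -/
  D : Set W
  D_nonempty : D.Nonempty
  /-- the space of disturbances -/
  Dist : Set (ℝ≥0 → W)
  dist_mem : ∀ d ∈ Dist, ∀ t : ℝ≥0, d t ∈ D
  /-- axiom of shift invariance -/
  shift_invariant : ∀ d ∈ Dist, ∀ τ : ℝ≥0, (fun t => d (t + τ)) ∈ Dist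
  /-- axiom of concatenation -/
  concat_mem : ∀ d₁ ∈ Dist, ∀ d₂ ∈ Dist, ∀ t : ℝ≥0, 0 < t →
      (fun s => if s ≤ t then d₁ s else d₂ (s - t)) ∈ Dist
  /-- the transition map -/
  φ : ℝ≥0 → X → (ℝ≥0 → W) → X
  identity : ∀ (x : X), ∀ d ∈ Dist, φ 0 x d = x
  causality : ∀ (t : ℝ≥0) (x : X), ∀ d ∈ Dist, ∀ d' ∈ Dist,
      (∀ s ≤ t, d s = d' s) → φ t x d = φ t x d'
  cont : ∀ (x : X), ∀ d ∈ Dist, Continuous fun t : ℝ≥0 => φ t x d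
  cocycle : ∀ (t h : ℝ≥0) (x : X), ∀ d ∈ Dist,
      φ h (φ t x d) (fun s => d (t + s)) = φ (t + h) x d

namespace System

variable {X : Type*} [NormedAddCommGroup X] [NormedSpace ℝ X]
variable {W : Type*} [NormedAddCommGroup W] [NormedSpace ℝ W]
variable (S : System X W)

/-- Reachability set within time `T`. -/
def RT (T : ℝ≥0) (B : Set X) : Set X :=
  {y | ∃ t ≤ T, ∃ d ∈ S.Dist, ∃ x ∈ B, y = S.φ t x d}

/-- Reachability set. -/
def R (B : Set X) : Set X :=
  {y | ∃ t : ℝ≥0, ∃ d ∈ S.Dist, ∃ x ∈ B, y = S.φ t x d}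

/-- Robust forward completeness. -/
def RFC : Prop :=
  ∀ C : ℝ≥0, 0 < C → ∀ τ : ℝ≥0, 0 < τ →
    IsBounded (S.RT τ {x : X | ‖x‖₊ ≤ C})

/-- Invariance of a set. -/
def Invariant (A : Set X) : Prop := S.R A ⊆ A

/-- Robust invariance of a set. -/
def RobustlyInvariant (A : Set X) : Prop :=
  S.Invariant A ∧
  ∀ ε : ℝ≥0, 0 < ε → ∀ h : ℝ≥0, 0 < h → ∃ δ : ℝ≥0, 0 < δ ∧
    ∀ t : ℝ≥0, t ≤ h → ∀ x : X, dA A x ≤ δ → ∀ d ∈ S.Dist, dA A (S.φ t x d) ≤ ε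

/-- Lagrange stability of a set. -/
def LagrangeStable (A : Set X) : Prop :=
  ∃ σ : ℝ≥0 → ℝ≥0, ClassKinf σ ∧ ∃ c : ℝ≥0, 0 < c ∧
    ∀ (x : X), ∀ d ∈ S.Dist, ∀ t : ℝ≥0, dA A (S.φ t x d) ≤ σ (dA A x) + c

/-- Uniform (local) stability of a set. -/
def ULS (A : Set X) : Prop :=
  ∀ ε : ℝ≥0, 0 < ε → ∃ δ : ℝ≥0, 0 < δ ∧
    ∀ x : X, dA A x ≤ δ → ∀ d ∈ S.Dist, ∀ t : ℝ≥0, dA A (S.φ t x d) ≤ ε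

/-- Uniform global stability of a set. -/
def UGS (A : Set X) : Prop :=
  ∃ σ : ℝ≥0 → ℝ≥0, ClassKinf σ ∧
    ∀ (x : X), ∀ d ∈ S.Dist, ∀ t : ℝ≥0, dA A (S.φ t x d) ≤ σ (dA A x)

/-- Uniform global asymptotic stability of a set. -/
def UGAS (A : Set X) : Prop :=
  ∃ β : ℝ≥0 → ℝ≥0 → ℝ≥0, ClassKL β ∧
    ∀ (x : X), ∀ d ∈ S.Dist, ∀ t : ℝ≥0, dA A (S.φ t x d) ≤ β (dA A x) t

/-- Practical uniform global asymptotic stability of a set. -/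
def PUGASSet (A : Set X) : Prop :=
  ∃ β : ℝ≥0 → ℝ≥0 → ℝ≥0, ClassKL β ∧ ∃ c : ℝ≥0, 0 < c ∧
    ∀ (x : X), ∀ d ∈ S.Dist, ∀ t : ℝ≥0, dA A (S.φ t x d) ≤ β (dA A x) t + c

/-- Global weak attractivity of a set. -/
def GWA (A : Set X) : Prop :=
  ∀ (x : X), ∀ d ∈ S.Dist, ∀ ε : ℝ≥0, 0 < ε → ∃ t : ℝ≥0, dA A (S.φ t x d) ≤ ε

/-- Uniform global weak attractivity of a set. -/
def UGWA (A : Set X) : Prop :=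
  ∀ ε : ℝ≥0, 0 < ε → ∀ r : ℝ≥0, 0 < r → ∃ τ : ℝ≥0,
    ∀ x : X, dA A x ≤ r → ∀ d ∈ S.Dist, ∃ t ≤ τ, dA A (S.φ t x d) ≤ ε

/-- Uniform global attractivity of a set. -/
def UGATT (A : Set X) : Prop :=
  ∀ ε : ℝ≥0, 0 < ε → ∀ r : ℝ≥0, 0 < r → ∃ τ : ℝ≥0,
    ∀ x : X, dA A x ≤ r → ∀ d ∈ S.Dist, ∀ t : ℝ≥0, τ ≤ t → dA A (S.φ t x d) ≤ ε

/-- Uniform ultimate boundedness of the system. -/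
def UUB : Prop :=
  ∃ K : ℝ≥0, 0 < K ∧ ∀ r : ℝ≥0, 0 < r → ∃ T : ℝ≥0,
    ∀ x : X, ‖x‖₊ ≤ r → ∀ d ∈ S.Dist, ∀ t : ℝ≥0, T ≤ t → ‖S.φ t x d‖₊ ≤ K

/-- Global recurrence of a set. -/
def GloballyRecurrent (A : Set X) : Prop :=
  ∀ (x : X), ∀ d ∈ S.Dist, ∃ t : ℝ≥0, S.φ t x d ∈ A

/-- Uniform global recurrence of a set. -/
def UniformlyGloballyRecurrent (A : Set X) : Prop :=
  ∀ R : ℝ≥0, 0 < R → ∃ τ : ℝ≥0,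
    ∀ x : X, dA A x ≤ R → ∀ d ∈ S.Dist, ∃ t ≤ τ, S.φ t x d ∈ A

/-- The set `P₊(A) = ⋂_{ε>0} ℛ(B_ε(A))`. -/
def Pplus (A : Set X) : Set X := ⋂ (ε : ℝ≥0) (_ : 0 < ε), S.R (ballSet ε A)

/-- Non-coercive Lyapunov function w.r.t. a bounded set `A`. -/
def NonCoerciveLyapunov (A : Set X) (V : X → ℝ) : Prop :=
  Continuous V ∧ (∀ x : X, 0 ≤ V x) ∧ (∀ x ∈ A, V x = 0) ∧
  (∃ ψ₂ : ℝ≥0 → ℝ≥0, ClassKinf ψ₂ ∧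
    ∀ x ∉ A, 0 < V x ∧ V x ≤ (ψ₂ (dA A x) : ℝ)) ∧
  (∃ α : ℝ≥0 → ℝ≥0, ClassK α ∧ ∀ x ∉ A, ∀ d ∈ S.Dist,
    Filter.liminf (fun t : ℝ≥0 => (V (S.φ t x d) - V x) / (t : ℝ))
      (𝓝[>] (0 : ℝ≥0)) ≤ -(α (dA A x) : ℝ))

/-- The system is Lagrange stable if some bounded nonempty set is Lagrange stable. -/
def SystemLagrangeStable : Prop :=
  ∃ A : Set X, A.Nonempty ∧ IsBounded A ∧ S.LagrangeStable A

/-- The system is pUGAS if some bounded nonempty set is pUGAS. -/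
def SystemPUGAS : Prop :=
  ∃ A : Set X, A.Nonempty ∧ IsBounded A ∧ S.PUGASSet A

end System

open MeasureTheory intervalIntegral Set in
private lemma exists_classKinf_majorant (g : ℝ≥0 → ℝ≥0) (hg : Monotone g) (hg0 : g 0 = 0)
    (hsmall : ∀ ε : ℝ≥0, 0 < ε → ∃ δ : ℝ≥0, 0 < δ ∧ ∀ r ≤ δ, g r ≤ ε) :
    ∃ η : ℝ≥0 → ℝ≥0, ClassKinf η ∧ ∀ r, g r ≤ η r := by
  set G : ℝ → ℝ := fun s => (g s.toNNReal : ℝ) with hG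
  have hGmono : Monotone G := fun a b hab => by
    exact_mod_cast hg (Real.toNNReal_mono hab)
  have hGnn : ∀ s, 0 ≤ G s := fun s => (g _).coe_nonneg
  have hG0 : G 0 = 0 := by simp [hG, hg0]
  have hint : ∀ (r : ℝ), 0 ≤ r → IntervalIntegrable (fun u => G (u * r)) volume 1 2 := by
    intro r hr
    exact (hGmono.comp (fun a b hab => mul_le_mul_of_nonneg_right hab hr)).intervalIntegrable
  set H : ℝ → ℝ := fun r => r + ∫ u in (1:ℝ)..2, G (u * r) with hH
  have hInn : ∀ (r : ℝ), 0 ≤ r → 0 ≤ ∫ u in (1:ℝ)..2, G (u * r) := by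
    intro r hr
    exact intervalIntegral.integral_nonneg (by norm_num) (fun u _ => hGnn _)
  have hIlb : ∀ (r : ℝ), 0 ≤ r → G r ≤ ∫ u in (1:ℝ)..2, G (u * r) := by
    intro r hr
    have : G r = ∫ _ in (1:ℝ)..2, G r := by rw [intervalIntegral.integral_const]; norm_num
    rw [this]
    refine intervalIntegral.integral_mono_on (by norm_num) intervalIntegrable_const (hint r hr) ?_
    intro u hu
    exact hGmono (by nlinarith [hu.1])
  have hIub : ∀ (r : ℝ), 0 ≤ r → (∫ u in (1:ℝ)..2, G (u * r)) ≤ G (2 * r) := by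
    intro r hr
    have : G (2*r) = ∫ _ in (1:ℝ)..2, G (2*r) := by rw [intervalIntegral.integral_const]; norm_num
    rw [this]
    refine intervalIntegral.integral_mono_on (by norm_num) (hint r hr) intervalIntegrable_const ?_
    intro u hu
    exact hGmono (by nlinarith [hu.2])
  have hHge : ∀ (r : ℝ), 0 ≤ r → r ≤ H r := fun r hr => le_add_of_nonneg_right (hInn r hr)
  have hH0 : H 0 = 0 := by
    simp only [hH]
    have : (fun u : ℝ => G (u * 0)) = fun _ => (0:ℝ) := by
      funext u; simp [hG0]
    rw [this]; simp
  have hHsm : ∀ r₁ r₂ : ℝ, 0 ≤ r₁ → r₁ < r₂ → H r₁ < H r₂ := by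
    intro r₁ r₂ h1 h12
    have hmono : (∫ u in (1:ℝ)..2, G (u * r₁)) ≤ ∫ u in (1:ℝ)..2, G (u * r₂) := by
      refine intervalIntegral.integral_mono_on (by norm_num) (hint r₁ h1)
        (hint r₂ (h1.trans h12.le)) ?_
      intro u hu
      exact hGmono (mul_le_mul_of_nonneg_left h12.le (by linarith [hu.1]))
    simpa [hH] using add_lt_add_of_lt_of_le h12 hmono
  -- continuity on Ici 0
  have hGint : ∀ a b : ℝ, IntervalIntegrable G volume a b := fun a b => hGmono.intervalIntegrable
  set P : ℝ → ℝ := fun x => ∫ s in (0:ℝ)..x, G s with hP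
  have hPcont : Continuous P := intervalIntegral.continuous_primitive hGint 0
  have hsub : ∀ r : ℝ, 0 < r → (∫ u in (1:ℝ)..2, G (u * r)) = r⁻¹ * (P (2*r) - P r) := by
    intro r hr
    rw [intervalIntegral.integral_comp_mul_right G hr.ne']
    rw [hP]
    rw [intervalIntegral.integral_interval_sub_left (hGint 0 (2*r)) (hGint 0 r)]
    simp [smul_eq_mul, one_mul, two_mul]
  have hHcontPos : ContinuousOn H (Ioi (0:ℝ)) := by
    have : ContinuousOn (fun r : ℝ => r + r⁻¹ * (P (2*r) - P r)) (Ioi 0) := by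
      apply continuousOn_id.add
      apply ContinuousOn.mul
      · exact continuousOn_inv₀.mono (fun x hx => ne_of_gt hx)
      · exact ((hPcont.comp (continuous_const.mul continuous_id)).sub hPcont).continuousOn
    refine this.congr ?_
    intro r hr
    simp only [hH]
    rw [hsub r hr]
  have hHcont0 : ContinuousWithinAt H (Ici 0) 0 := by
    rw [ContinuousWithinAt, hH0]
    have hub : Tendsto (fun r : ℝ => r + G (2 * r)) (𝓝[≥] (0:ℝ)) (𝓝 0) := by
      have hGt : Tendsto (fun r : ℝ => G (2 * r)) (𝓝[≥] (0:ℝ)) (𝓝 0) := by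
        rw [Metric.tendsto_nhdsWithin_nhds]
        intro ε hε
        obtain ⟨δ, hδ, hδle⟩ := hsmall (ε/2).toNNReal (by simp [Real.toNNReal_pos]; positivity)
        refine ⟨(δ:ℝ)/2, by positivity, ?_⟩
        intro x hx hdx
        have hx2 : (2*x).toNNReal ≤ δ := by
          rw [Real.dist_eq] at hdx
          have : |x| < (δ:ℝ)/2 := by simpa using hdx
          rw [abs_lt] at this
          refine Real.toNNReal_le_iff_le_coe.mpr (by linarith [this.2])
        have := hδle _ hx2
        have hc : G (2*x) ≤ ε/2 := by
          calc G (2*x) ≤ ((ε/2).toNNReal : ℝ) := by exact_mod_cast this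
          _ = ε/2 := Real.coe_toNNReal _ (by positivity)
        rw [Real.dist_eq]
        have := hGnn (2*x)
        rw [abs_of_nonneg (by simpa using this)]
        simp only [sub_zero]
        linarith
      have : Tendsto (fun r : ℝ => r) (𝓝[≥] (0:ℝ)) (𝓝 0) :=
        tendsto_nhdsWithin_of_tendsto_nhds tendsto_id
      simpa using this.add hGt
    have hlb : Tendsto (fun _ : ℝ => (0:ℝ)) (𝓝[≥] (0:ℝ)) (𝓝 0) := tendsto_const_nhds
    refine tendsto_of_tendsto_of_tendsto_of_le_of_le' hlb hub ?_ ?_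
    · filter_upwards [self_mem_nhdsWithin] with r hr
      exact le_trans hr (hHge r hr)
    · filter_upwards [self_mem_nhdsWithin] with r hr
      exact add_le_add le_rfl (hIub r hr)
  have hHcont : ContinuousOn H (Ici (0:ℝ)) := by
    intro x hx
    rcases eq_or_lt_of_le (Set.mem_Ici.mp hx) with h | h
    · rw [← h]; exact hHcont0
    · exact ((hHcontPos x h).continuousAt (Ioi_mem_nhds h)).continuousWithinAt
  -- define η
  refine ⟨fun r => (H r).toNNReal, ⟨⟨?_, ?_, ?_⟩, ?_⟩, ?_⟩
  · exact continuous_real_toNNReal.comp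
      (hHcont.comp_continuous NNReal.continuous_coe (fun x => x.coe_nonneg))
  · intro r₁ r₂ h12
    have hr2 : (0:ℝ) < r₂ := lt_of_le_of_lt r₁.coe_nonneg (by exact_mod_cast h12)
    have : H (r₁:ℝ) < H r₂ := hHsm _ _ r₁.coe_nonneg (by exact_mod_cast h12)
    exact (Real.toNNReal_lt_toNNReal_iff (lt_of_lt_of_le hr2 (hHge _ hr2.le))).mpr this
  · simp [hH0]
  · intro M
    refine ⟨M + 1, ?_⟩
    have h1 : ((M:ℝ) + 1) ≤ H ((M+1 : ℝ≥0):ℝ) := by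
      have := hHge ((M+1:ℝ≥0):ℝ) (M+1:ℝ≥0).coe_nonneg
      simpa using this
    have : (M + 1 : ℝ≥0) ≤ (H ((M+1:ℝ≥0):ℝ)).toNNReal := by
      rw [Real.le_toNNReal_iff_coe_le (le_trans (by positivity) h1)]
      exact_mod_cast h1
    exact lt_of_lt_of_le (lt_add_one M) this
  · intro r
    have h1 : (g r : ℝ) ≤ H (r:ℝ) := by
      have := hIlb (r:ℝ) r.coe_nonneg
      have hGr : G (r:ℝ) = (g r : ℝ) := by simp [hG]
      rw [hGr] at this
      exact le_trans this (le_add_of_nonneg_left r.coe_nonneg)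
    rw [Real.le_toNNReal_iff_coe_le (le_trans (g r).coe_nonneg h1)]
    exact h1

/-- UGS iff ULS together with Lagrange stability. -/
theorem stmt1 {X : Type*} [NormedAddCommGroup X] [NormedSpace ℝ X]
    {W : Type*} [NormedAddCommGroup W] [NormedSpace ℝ W] (S : System X W) (A : Set X) (hA : A.Nonempty) :
    S.UGS A ↔ S.ULS A ∧ S.LagrangeStable A := by
  constructor
  · rintro ⟨σ, hσ, hb⟩
    constructor
    · intro ε hε
      have htend : Filter.Tendsto σ (𝓝 0) (𝓝 0) := by
        have := hσ.1.1.tendsto 0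
        rwa [hσ.1.2.2] at this
      have hU : σ ⁻¹' (Set.Iio ε) ∈ 𝓝 (0 : ℝ≥0) := htend (Iio_mem_nhds hε)
      obtain ⟨δ, hδ, hδsub⟩ := NNReal.nhds_zero_basis.mem_iff.mp hU
      refine ⟨δ/2, by positivity, ?_⟩
      intro x hx d hd t
      have : σ (dA A x) < ε := hδsub (lt_of_le_of_lt hx (NNReal.half_lt_self hδ.ne'))
      exact le_trans (hb x d hd t) this.le
    · exact ⟨σ, hσ, 1, one_pos, fun x d hd t => (hb x d hd t).trans le_self_add⟩
  · rintro ⟨hULS, σ, hσ, c, hc, hb⟩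
    set T : ℝ≥0 → Set ℝ≥0 := fun r =>
      insert 0 {y | ∃ x : X, ∃ d ∈ S.Dist, ∃ t : ℝ≥0, dA A x ≤ r ∧ y = dA A (S.φ t x d)}
      with hT
    have hTne : ∀ r, (T r).Nonempty := fun r => ⟨0, Set.mem_insert _ _⟩
    have hTbdd : ∀ r, ∀ y ∈ T r, y ≤ σ r + c := by
      rintro r y (rfl | ⟨x, d, hd, t, hx, rfl⟩)
      · exact zero_le
      · exact le_trans (hb x d hd t)
          (add_le_add_left (hσ.1.2.1.monotone hx) c)
    set g : ℝ≥0 → ℝ≥0 := fun r => sSup (T r) with hgdef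
    have hgmono : Monotone g := by
      intro r₁ r₂ h12
      refine csSup_le_csSup ⟨σ r₂ + c, fun y hy => hTbdd r₂ y hy⟩ (hTne r₁) ?_
      rintro y (rfl | ⟨x, d, hd, t, hx, rfl⟩)
      · exact Set.mem_insert _ _
      · exact Set.mem_insert_of_mem _ ⟨x, d, hd, t, hx.trans h12, rfl⟩
    have hsmall : ∀ ε : ℝ≥0, 0 < ε → ∃ δ : ℝ≥0, 0 < δ ∧ ∀ r ≤ δ, g r ≤ ε := by
      intro ε hε
      obtain ⟨δ, hδ, hδp⟩ := hULS ε hε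
      refine ⟨δ, hδ, fun r hr => ?_⟩
      refine csSup_le (hTne r) ?_
      rintro y (rfl | ⟨x, d, hd, t, hx, rfl⟩)
      · exact zero_le
      · exact hδp x (hx.trans hr) d hd t
    have hg0 : g 0 = 0 := by
      refine le_antisymm ?_ zero_le
      refine csSup_le (hTne 0) ?_
      rintro y (rfl | ⟨x, d, hd, t, hx, rfl⟩)
      · exact le_rfl
      · have hall : ∀ ε : ℝ≥0, 0 < ε → dA A (S.φ t x d) ≤ ε := by
          intro ε hε
          obtain ⟨δ, hδ, hδp⟩ := hULS ε hε
          exact hδp x (le_trans hx zero_le) d hd t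
        by_contra hpos
        have h0 : 0 < dA A (S.φ t x d) := pos_iff_ne_zero.mpr (fun h => hpos (le_of_eq h))
        exact absurd (hall _ (half_pos h0)) (not_le.mpr (NNReal.half_lt_self h0.ne'))
    have hgpt : ∀ (x : X), ∀ d ∈ S.Dist, ∀ t : ℝ≥0, dA A (S.φ t x d) ≤ g (dA A x) := by
      intro x d hd t
      refine le_csSup ⟨σ (dA A x) + c, fun y hy => hTbdd _ y hy⟩ ?_
      exact Set.mem_insert_of_mem _ ⟨x, d, hd, t, le_rfl, rfl⟩
    obtain ⟨η, hη, hgη⟩ := exists_classKinf_majorant g hgmono hg0 hsmall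
    exact ⟨η, hη, fun x d hd t => (hgpt x d hd t).trans (hgη _)⟩
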